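/- For probability measures μ, ν on ℝ with finite second moments, the 2-Wasserstein distance satisfies W₂(μ, ν)² = ∫₀¹ (q_μ(α) − q_ν(α))² dα, where q_μ, q_ν are the quantile functions; i.e. the optimal coupling on the real line is given by the comonotone (quantile) coupling. -/

import Mathlib

open MeasureTheory

/-- The quantile function `q_μ(α) = inf{x : μ((−∞, x]) ≥ α}` of a measure on `ℝ`. -/
noncomputable def quantileFn (μ : Measure ℝ) (α : ℝ) : ℝ :=
  sInf {x : ℝ | α ≤ (μ (Set.Iic x)).toReal}

/-- The squared 2-Wasserstein distance between `μ` and `ν`, as the infimum of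
`∫ (x−y)² dπ` over couplings `π` of `μ` and `ν`. -/
noncomputable def wasserstein2Sq (μ ν : Measure ℝ) : ℝ :=
  sInf {r : ℝ | ∃ π : Measure (ℝ × ℝ), IsProbabilityMeasure π ∧
    π.map Prod.fst = μ ∧ π.map Prod.snd = ν ∧ r = ∫ p : ℝ × ℝ, (p.1 - p.2) ^ 2 ∂π}

open Set Filter

set_option linter.unusedSectionVars false

/-! ### Basic properties of the quantile function -/

section QAux

variable {μ : Measure ℝ} [IsProbabilityMeasure μ] {α x : ℝ}

lemma cdf_mono : Monotone fun x : ℝ => (μ (Iic x)).toReal := fun a b h =>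
  ENNReal.toReal_mono (measure_ne_top _ _) (measure_mono (Iic_subset_Iic.2 h))

lemma cdf_nonneg (x : ℝ) : 0 ≤ (μ (Iic x)).toReal := ENNReal.toReal_nonneg

lemma cdf_le_one (x : ℝ) : (μ (Iic x)).toReal ≤ 1 := by
  have : μ (Iic x) ≤ 1 := le_trans (measure_mono (subset_univ _)) (by simp)
  simpa using ENNReal.toReal_mono (by simp) this

lemma qset_nonempty (hα : α < 1) : {x : ℝ | α ≤ (μ (Iic x)).toReal}.Nonempty := by
  have h1 : Tendsto (fun x : ℝ => (μ (Iic x)).toReal) atTop (nhds 1) := by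
    have := (ENNReal.tendsto_toReal (by simp : μ univ ≠ ⊤)).comp
      (tendsto_measure_Iic_atTop μ)
    simpa [Function.comp_def] using this
  obtain ⟨x, hx⟩ := (h1.eventually (eventually_ge_nhds hα)).exists
  exact ⟨x, hx⟩

lemma qset_bddBelow (hα : 0 < α) : BddBelow {x : ℝ | α ≤ (μ (Iic x)).toReal} := by
  have hmeas : Tendsto (fun n : ℕ => μ (Iic (-(n : ℝ)))) atTop
      (nhds (μ (⋂ n : ℕ, Iic (-(n : ℝ))))) := by
    refine tendsto_measure_iInter_atTop (fun n => measurableSet_Iic.nullMeasurableSet)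
      (fun m n hmn => Iic_subset_Iic.2 (by exact_mod_cast neg_le_neg (Nat.cast_le.2 hmn)))
      ⟨0, measure_ne_top _ _⟩
  have hempty : (⋂ n : ℕ, Iic (-(n : ℝ))) = ∅ := by
    ext y
    simp only [mem_iInter, mem_Iic, mem_empty_iff_false, iff_false, not_forall, not_le]
    obtain ⟨n, hn⟩ := exists_nat_gt (-y)
    exact ⟨n, by linarith⟩
  rw [hempty, measure_empty] at hmeas
  have : ∀ᶠ n : ℕ in atTop, μ (Iic (-(n : ℝ))) < ENNReal.ofReal α :=
    hmeas.eventually_lt_const (by simpa using hα)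
  obtain ⟨n, hn⟩ := this.exists
  refine ⟨-(n : ℝ), fun x hx => ?_⟩
  by_contra h
  push_neg at h
  have : μ (Iic x) ≤ μ (Iic (-(n : ℝ))) := measure_mono (Iic_subset_Iic.2 h.le)
  have hlt : μ (Iic x) < ENNReal.ofReal α := lt_of_le_of_lt this hn
  have h2 : (μ (Iic x)).toReal < α := by
    rw [← ENNReal.toReal_ofReal hα.le]
    exact ENNReal.toReal_strict_mono (by simp) hlt
  exact absurd hx (not_le.2 h2)

lemma le_cdf_quantile (hα0 : 0 < α) (hα1 : α < 1) :
    α ≤ (μ (Iic (quantileFn μ α))).toReal := by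
  set q := quantileFn μ α with hq
  have hne := qset_nonempty (μ := μ) hα1
  have hbdd := qset_bddBelow (μ := μ) hα0
  have hmem : ∀ n : ℕ, ENNReal.ofReal α ≤ μ (Iic (q + 1 / (n + 1))) := by
    intro n
    obtain ⟨x, hxS, hxlt⟩ := Real.lt_sInf_add_pos hne
      (by positivity : (0:ℝ) < 1 / (n + 1))
    have : α ≤ (μ (Iic (q + 1 / (n + 1)))).toReal :=
      le_trans hxS (cdf_mono hxlt.le)
    exact ENNReal.ofReal_le_of_le_toReal this
  have hiInter : (⋂ n : ℕ, Iic (q + 1 / ((n : ℝ) + 1))) = Iic q := by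
    ext y
    simp only [mem_iInter, mem_Iic]
    constructor
    · intro h
      refine le_of_forall_pos_le_add fun ε hε => ?_
      obtain ⟨n, hn⟩ := exists_nat_one_div_lt hε
      exact (h n).trans (by linarith [hn])
    · intro h n
      have : (0:ℝ) < 1 / ((n:ℝ) + 1) := by positivity
      linarith
  have htend : Tendsto (fun n : ℕ => μ (Iic (q + 1 / ((n : ℝ) + 1)))) atTop
      (nhds (μ (Iic q))) := by
    rw [← hiInter]
    refine tendsto_measure_iInter_atTop (fun n => measurableSet_Iic.nullMeasurableSet)
      (fun m n hmn => Iic_subset_Iic.2 ?_) ⟨0, measure_ne_top _ _⟩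
    have : (1 : ℝ) / ((n : ℝ) + 1) ≤ 1 / ((m : ℝ) + 1) := by
      apply one_div_le_one_div_of_le (by positivity)
      exact_mod_cast by linarith [(Nat.cast_le (α := ℝ)).2 hmn]
    linarith
  have : ENNReal.ofReal α ≤ μ (Iic q) := ge_of_tendsto' htend hmem
  rwa [ENNReal.ofReal_le_iff_le_toReal (measure_ne_top _ _)] at this

lemma le_cdf_iff (hα0 : 0 < α) (hα1 : α < 1) :
    α ≤ (μ (Iic x)).toReal ↔ quantileFn μ α ≤ x := by
  constructor
  · intro h
    exact csInf_le (qset_bddBelow hα0) h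
  · intro h
    exact (le_cdf_quantile hα0 hα1).trans (cdf_mono h)

lemma quantile_monotoneOn : MonotoneOn (quantileFn μ) (Ioo (0:ℝ) 1) := by
  intro a ha b hb hab
  exact le_csInf (qset_nonempty hb.2) fun x hx =>
    csInf_le (qset_bddBelow ha.1) (le_trans hab hx)

end QAux

/-! ### The quantile map pushes Lebesgue measure on (0,1) to μ -/

section Push
variable {μ ν : Measure ℝ} [IsProbabilityMeasure μ] [IsProbabilityMeasure ν]

instance : IsProbabilityMeasure (volume.restrict (Ioo (0:ℝ) 1)) :=
  ⟨by simp [Measure.restrict_apply_univ, Real.volume_Ioo]⟩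

lemma quantile_aemeasurable :
    AEMeasurable (quantileFn μ) (volume.restrict (Ioo (0:ℝ) 1)) :=
  aemeasurable_restrict_of_monotoneOn measurableSet_Ioo quantile_monotoneOn

lemma vol_Iic_inter {c : ℝ} (hc0 : 0 ≤ c) (hc1 : c ≤ 1) :
    volume (Iic c ∩ Ioo (0:ℝ) 1) = ENNReal.ofReal c := by
  rcases lt_or_ge c 1 with hlt | hge
  · have : Iic c ∩ Ioo (0:ℝ) 1 = Ioc 0 c := by
      ext α
      simp only [mem_inter_iff, mem_Iic, mem_Ioo, mem_Ioc]
      exact ⟨fun ⟨h, h0, _⟩ => ⟨h0, h⟩, fun ⟨h0, h⟩ => ⟨h, h0, lt_of_le_of_lt h hlt⟩⟩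
    rw [this, Real.volume_Ioc, sub_zero]
  · have hc : c = 1 := le_antisymm hc1 hge
    subst hc
    have : Iic (1:ℝ) ∩ Ioo (0:ℝ) 1 = Ioo 0 1 :=
      inter_eq_self_of_subset_right (fun α hα => le_of_lt hα.2)
    rw [this, Real.volume_Ioo]; norm_num

lemma vol_Ioi_inter {b : ℝ} (hb0 : 0 ≤ b) :
    volume (Ioi b ∩ Ioo (0:ℝ) 1) = ENNReal.ofReal (1 - b) := by
  have : Ioi b ∩ Ioo (0:ℝ) 1 = Ioo b 1 := by
    ext α
    simp only [mem_inter_iff, mem_Ioi, mem_Ioo]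
    exact ⟨fun ⟨h, _, h1⟩ => ⟨h, h1⟩, fun ⟨h, h1⟩ => ⟨h, lt_of_le_of_lt hb0 h, h1⟩⟩
  rw [this, Real.volume_Ioo]

lemma quantile_map : (volume.restrict (Ioo (0:ℝ) 1)).map (quantileFn μ) = μ := by
  haveI : IsProbabilityMeasure ((volume.restrict (Ioo (0:ℝ) 1)).map (quantileFn μ)) :=
    Measure.isProbabilityMeasure_map quantile_aemeasurable
  refine Measure.ext_of_Iic _ _ fun x => ?_
  rw [Measure.map_apply_of_aemeasurable quantile_aemeasurable measurableSet_Iic,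
    Measure.restrict_apply' measurableSet_Ioo]
  have hset : quantileFn μ ⁻¹' Iic x ∩ Ioo (0:ℝ) 1
      = Iic ((μ (Iic x)).toReal) ∩ Ioo (0:ℝ) 1 := by
    ext α
    simp only [mem_inter_iff, mem_preimage, mem_Iic, mem_Ioo]
    constructor
    · rintro ⟨h, h0, h1⟩
      exact ⟨(le_cdf_iff h0 h1).2 h, h0, h1⟩
    · rintro ⟨h, h0, h1⟩
      exact ⟨(le_cdf_iff h0 h1).1 h, h0, h1⟩
  rw [hset, vol_Iic_inter (cdf_nonneg x) (cdf_le_one x),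
    ENNReal.ofReal_toReal (measure_ne_top _ _)]

end Push

/-! ### The auxiliary kernel g x s = 1_{s<x} - 1_{s<0} -/

noncomputable def gker (x s : ℝ) : ℝ := (if s < x then 1 else 0) - (if s < 0 then 1 else 0)

lemma gker_eq_pos {x : ℝ} (hx : 0 ≤ x) :
    gker x = Set.indicator (Ico (0:ℝ) x) (fun _ => (1:ℝ)) := by
  funext s
  by_cases h2 : s < 0
  · have h1 : s < x := lt_of_lt_of_le h2 hx
    have hm : s ∉ Ico (0:ℝ) x := fun h => absurd h.1 (not_le.2 h2)
    simp [gker, h1, h2, Set.indicator_of_notMem hm]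
  · by_cases h1 : s < x
    · have hm : s ∈ Ico (0:ℝ) x := ⟨not_lt.1 h2, h1⟩
      simp [gker, h1, h2, Set.indicator_of_mem hm]
    · have hm : s ∉ Ico (0:ℝ) x := fun h => absurd h.2 h1
      simp [gker, h1, h2, Set.indicator_of_notMem hm]

lemma gker_eq_neg {x : ℝ} (hx : x < 0) :
    gker x = Set.indicator (Ico x (0:ℝ)) (fun _ => (-1:ℝ)) := by
  funext s
  by_cases h1 : s < x
  · have h2 : s < 0 := lt_trans h1 hx
    have hm : s ∉ Ico x (0:ℝ) := fun h => absurd h.1 (not_le.2 h1)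
    simp [gker, h1, h2, Set.indicator_of_notMem hm]
  · by_cases h2 : s < 0
    · have hm : s ∈ Ico x (0:ℝ) := ⟨not_lt.1 h1, h2⟩
      simp [gker, h1, h2, Set.indicator_of_mem hm]
    · have hm : s ∉ Ico x (0:ℝ) := fun h => absurd h.2 h2
      simp [gker, h1, h2, Set.indicator_of_notMem hm]

lemma gker_integrable (x : ℝ) : Integrable (gker x) volume := by
  rcases le_or_gt 0 x with hx | hx
  · rw [gker_eq_pos hx]
    exact (integrableOn_const measure_Ico_lt_top.ne).integrable_indicator
      measurableSet_Ico
  · rw [gker_eq_neg hx]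
    exact (integrableOn_const measure_Ico_lt_top.ne).integrable_indicator
      measurableSet_Ico

lemma gker_integral (x : ℝ) : ∫ s, gker x s = x := by
  rcases le_or_gt 0 x with hx | hx
  · rw [gker_eq_pos hx, integral_indicator_const _ measurableSet_Ico]
    simp [Real.volume_Ico, hx]
  · rw [gker_eq_neg hx, integral_indicator_const _ measurableSet_Ico]
    simp only [Real.volume_Ico, smul_eq_mul]
    rw [measureReal_def, Real.volume_Ico, ENNReal.toReal_ofReal (by linarith)]
    ring

lemma gker_lintegral (x : ℝ) : ∫⁻ s, ‖gker x s‖₊ ∂volume = ENNReal.ofReal |x| := by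
  rcases le_or_gt 0 x with hx | hx
  · have : (fun s => (‖gker x s‖₊ : ENNReal))
        = Set.indicator (Ico (0:ℝ) x) (fun _ => (1:ENNReal)) := by
      funext s
      rw [gker_eq_pos hx]
      by_cases h : s ∈ Ico (0:ℝ) x <;> simp [h]
    rw [this, lintegral_indicator measurableSet_Ico]
    simp [Real.volume_Ico, abs_of_nonneg hx]
  · have : (fun s => (‖gker x s‖₊ : ENNReal))
        = Set.indicator (Ico x (0:ℝ)) (fun _ => (1:ENNReal)) := by
      funext s
      rw [gker_eq_neg hx]
      by_cases h : s ∈ Ico x (0:ℝ) <;> simp [h]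
    rw [this, lintegral_indicator measurableSet_Ico]
    simp [Real.volume_Ico, abs_of_neg hx]

lemma gker_measurable : Measurable (fun q : ℝ × ℝ => gker q.1 q.2) := by
  unfold gker
  apply Measurable.sub
  · exact Measurable.ite (measurableSet_lt measurable_snd measurable_fst)
      measurable_const measurable_const
  · exact Measurable.ite (measurableSet_lt measurable_snd measurable_const)
      measurable_const measurable_const

/-! ### Couplings: integrability and the Fubini identity for E[XY] -/

section Coupling
variable {μ ν : Measure ℝ} [IsProbabilityMeasure μ] [IsProbabilityMeasure ν]
variable {π : Measure (ℝ × ℝ)} [IsProbabilityMeasure π]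

lemma integrable_fst_sq (h1 : π.map Prod.fst = μ)
    (hμ2 : Integrable (fun x : ℝ => x ^ 2) μ) :
    Integrable (fun p : ℝ × ℝ => p.1 ^ 2) π := by
  have h : Integrable (fun x : ℝ => x ^ 2) (π.map Prod.fst) := h1 ▸ hμ2
  exact (integrable_map_measure ((measurable_id.pow_const 2).aestronglyMeasurable)
    measurable_fst.aemeasurable).1 h

lemma integrable_snd_sq (h2 : π.map Prod.snd = ν)
    (hν2 : Integrable (fun x : ℝ => x ^ 2) ν) :
    Integrable (fun p : ℝ × ℝ => p.2 ^ 2) π := by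
  have h : Integrable (fun x : ℝ => x ^ 2) (π.map Prod.snd) := h2 ▸ hν2
  exact (integrable_map_measure ((measurable_id.pow_const 2).aestronglyMeasurable)
    measurable_snd.aemeasurable).1 h

lemma integrable_mul_coupling (h1 : π.map Prod.fst = μ) (h2 : π.map Prod.snd = ν)
    (hμ2 : Integrable (fun x : ℝ => x ^ 2) μ) (hν2 : Integrable (fun x : ℝ => x ^ 2) ν) :
    Integrable (fun p : ℝ × ℝ => p.1 * p.2) π := by
  refine Integrable.mono (((integrable_fst_sq h1 hμ2).add (integrable_snd_sq h2 hν2)).div_const 2)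
    ((measurable_fst.mul measurable_snd).aestronglyMeasurable) ?_
  filter_upwards with p
  simp only [Real.norm_eq_abs, Pi.add_apply]
  rw [abs_mul, abs_of_nonneg (by positivity : (0:ℝ) ≤ (p.1 ^ 2 + p.2 ^ 2) / 2)]
  nlinarith [sq_abs p.1, sq_abs p.2, sq_nonneg (|p.1| - |p.2|)]

lemma bigF_integrable (h1 : π.map Prod.fst = μ) (h2 : π.map Prod.snd = ν)
    (hμ2 : Integrable (fun x : ℝ => x ^ 2) μ) (hν2 : Integrable (fun x : ℝ => x ^ 2) ν) :
    Integrable (fun q : (ℝ × ℝ) × (ℝ × ℝ) => gker q.1.1 q.2.1 * gker q.1.2 q.2.2)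
      (π.prod (volume.prod volume)) := by
  have hmeas : Measurable (fun q : (ℝ × ℝ) × (ℝ × ℝ) => gker q.1.1 q.2.1 * gker q.1.2 q.2.2) :=
    (gker_measurable.comp (measurable_fst.fst.prodMk measurable_snd.fst)).mul
      (gker_measurable.comp (measurable_fst.snd.prodMk measurable_snd.snd))
  refine ⟨hmeas.aestronglyMeasurable, ?_⟩
  rw [HasFiniteIntegral]
  rw [lintegral_prod _ (hmeas.enorm.aemeasurable)]
  simp only [enorm_eq_nnnorm]
  have hinner : ∀ p : ℝ × ℝ,
      (∫⁻ st : ℝ × ℝ, ‖gker p.1 st.1 * gker p.2 st.2‖₊ ∂(volume.prod volume))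
        = ENNReal.ofReal |p.1| * ENNReal.ofReal |p.2| := by
    intro p
    have : ∀ st : ℝ × ℝ, (‖gker p.1 st.1 * gker p.2 st.2‖₊ : ENNReal)
        = (‖gker p.1 st.1‖₊ : ENNReal) * (‖gker p.2 st.2‖₊ : ENNReal) := by
      intro st; rw [nnnorm_mul]; push_cast; ring
    simp_rw [this]
    have hm1 : Measurable fun s : ℝ => gker p.1 s :=
      gker_measurable.comp (measurable_const.prodMk measurable_id)
    have hm2 : Measurable fun s : ℝ => gker p.2 s :=
      gker_measurable.comp (measurable_const.prodMk measurable_id)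
    rw [lintegral_prod_mul hm1.nnnorm.coe_nnreal_ennreal.aemeasurable hm2.nnnorm.coe_nnreal_ennreal.aemeasurable,
      gker_lintegral, gker_lintegral]
  simp_rw [hinner]
  have hint : Integrable (fun p : ℝ × ℝ => (p.1 ^ 2 + p.2 ^ 2) / 2) π :=
    ((integrable_fst_sq h1 hμ2).add (integrable_snd_sq h2 hν2)).div_const 2
  have hb : ∀ p : ℝ × ℝ, ENNReal.ofReal |p.1| * ENNReal.ofReal |p.2|
      ≤ ‖(p.1 ^ 2 + p.2 ^ 2) / 2‖₊ := by
    intro p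
    rw [← ENNReal.ofReal_mul (abs_nonneg _)]
    refine le_trans (ENNReal.ofReal_le_ofReal ?_) (Real.ofReal_le_enorm _)
    nlinarith [sq_abs p.1, sq_abs p.2, sq_nonneg (|p.1| - |p.2|)]
  calc ∫⁻ p : ℝ × ℝ, ENNReal.ofReal |p.1| * ENNReal.ofReal |p.2| ∂π
      ≤ ∫⁻ p : ℝ × ℝ, ‖(p.1 ^ 2 + p.2 ^ 2) / 2‖₊ ∂π := lintegral_mono hb
    _ < ⊤ := hint.hasFiniteIntegral

lemma fubini_xy (h1 : π.map Prod.fst = μ) (h2 : π.map Prod.snd = ν)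
    (hμ2 : Integrable (fun x : ℝ => x ^ 2) μ) (hν2 : Integrable (fun x : ℝ => x ^ 2) ν) :
    ∫ p : ℝ × ℝ, p.1 * p.2 ∂π
      = ∫ st : ℝ × ℝ, (∫ p : ℝ × ℝ, gker p.1 st.1 * gker p.2 st.2 ∂π)
          ∂(volume.prod volume) := by
  have key : (fun p : ℝ × ℝ => p.1 * p.2)
      = fun p : ℝ × ℝ => ∫ st : ℝ × ℝ, gker p.1 st.1 * gker p.2 st.2
          ∂(volume.prod volume) := by
    funext p
    rw [integral_prod_mul (f := gker p.1) (g := gker p.2), gker_integral, gker_integral]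
  rw [key]
  exact integral_integral_swap (bigF_integrable h1 h2 hμ2 hν2)

lemma J_integrable (h1 : π.map Prod.fst = μ) (h2 : π.map Prod.snd = ν)
    (hμ2 : Integrable (fun x : ℝ => x ^ 2) μ) (hν2 : Integrable (fun x : ℝ => x ^ 2) ν) :
    Integrable (fun st : ℝ × ℝ => ∫ p : ℝ × ℝ, gker p.1 st.1 * gker p.2 st.2 ∂π)
      (volume.prod volume) :=
  (bigF_integrable h1 h2 hμ2 hν2).integral_prod_right

/-! ### The Hoeffding expansion of J and the Fréchet bound -/

lemma measurableSet_A (s t : ℝ) : MeasurableSet {p : ℝ × ℝ | s < p.1 ∧ t < p.2} :=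
  (measurableSet_lt measurable_const measurable_fst).inter
    (measurableSet_lt measurable_const measurable_snd)

lemma marg_fst (h1 : π.map Prod.fst = μ) (s : ℝ) :
    π {p : ℝ × ℝ | s < p.1} = μ (Ioi s) := by
  rw [← h1, Measure.map_apply measurable_fst measurableSet_Ioi]; rfl

lemma marg_snd (h2 : π.map Prod.snd = ν) (t : ℝ) :
    π {p : ℝ × ℝ | t < p.2} = ν (Ioi t) := by
  rw [← h2, Measure.map_apply measurable_snd measurableSet_Ioi]; rfl

lemma J_expand (h1 : π.map Prod.fst = μ) (h2 : π.map Prod.snd = ν) (s t : ℝ) :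
    ∫ p : ℝ × ℝ, gker p.1 s * gker p.2 t ∂π
      = (π {p : ℝ × ℝ | s < p.1 ∧ t < p.2}).toReal
        - (if t < 0 then (1:ℝ) else 0) * (μ (Ioi s)).toReal
        - (if s < 0 then (1:ℝ) else 0) * (ν (Ioi t)).toReal
        + (if s < 0 then (1:ℝ) else 0) * (if t < 0 then (1:ℝ) else 0) := by
  have hA : MeasurableSet {p : ℝ × ℝ | s < p.1 ∧ t < p.2} := measurableSet_A s t
  have hB : MeasurableSet {p : ℝ × ℝ | s < p.1} :=
    measurableSet_lt measurable_const measurable_fst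
  have hC : MeasurableSet {p : ℝ × ℝ | t < p.2} :=
    measurableSet_lt measurable_const measurable_snd
  have hIA : Integrable ({p : ℝ × ℝ | s < p.1 ∧ t < p.2}.indicator fun _ => (1:ℝ)) π :=
    (integrable_const 1).indicator hA
  have hIB : Integrable ({p : ℝ × ℝ | s < p.1}.indicator fun _ => (1:ℝ)) π :=
    (integrable_const 1).indicator hB
  have hIC : Integrable ({p : ℝ × ℝ | t < p.2}.indicator fun _ => (1:ℝ)) π :=
    (integrable_const 1).indicator hC
  have key : (fun p : ℝ × ℝ => gker p.1 s * gker p.2 t)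
      = fun p : ℝ × ℝ =>
        ({p : ℝ × ℝ | s < p.1 ∧ t < p.2}.indicator (fun _ => (1:ℝ)) p
          - (if t < 0 then (1:ℝ) else 0) * ({p : ℝ × ℝ | s < p.1}.indicator (fun _ => (1:ℝ)) p)
          - (if s < 0 then (1:ℝ) else 0) * ({p : ℝ × ℝ | t < p.2}.indicator (fun _ => (1:ℝ)) p))
          + (if s < 0 then (1:ℝ) else 0) * (if t < 0 then (1:ℝ) else 0) := by
    funext p
    simp only [Set.indicator_apply, mem_setOf_eq, gker]
    by_cases hxs : s < p.1 <;> by_cases hyt : t < p.2 <;> by_cases hs0 : s < 0 <;>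
      by_cases ht0 : t < 0 <;> simp [hxs, hyt, hs0, ht0] <;> ring
  have hI2 : Integrable (fun p : ℝ × ℝ =>
      (if t < 0 then (1:ℝ) else 0) * {p : ℝ × ℝ | s < p.1}.indicator (fun _ => (1:ℝ)) p) π :=
    hIB.const_mul _
  have hI3 : Integrable (fun p : ℝ × ℝ =>
      (if s < 0 then (1:ℝ) else 0) * {p : ℝ × ℝ | t < p.2}.indicator (fun _ => (1:ℝ)) p) π :=
    hIC.const_mul _
  have hI12 : Integrable (fun p : ℝ × ℝ =>
      {p : ℝ × ℝ | s < p.1 ∧ t < p.2}.indicator (fun _ => (1:ℝ)) p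
        - (if t < 0 then (1:ℝ) else 0) * {p : ℝ × ℝ | s < p.1}.indicator (fun _ => (1:ℝ)) p) π :=
    hIA.sub hI2
  have hI123 : Integrable (fun p : ℝ × ℝ =>
      {p : ℝ × ℝ | s < p.1 ∧ t < p.2}.indicator (fun _ => (1:ℝ)) p
        - (if t < 0 then (1:ℝ) else 0) * {p : ℝ × ℝ | s < p.1}.indicator (fun _ => (1:ℝ)) p
        - (if s < 0 then (1:ℝ) else 0) * {p : ℝ × ℝ | t < p.2}.indicator (fun _ => (1:ℝ)) p) π :=
    hI12.sub hI3
  rw [key, integral_add hI123 (integrable_const _), integral_sub hI12 hI3,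
    integral_sub hIA hI2, integral_const_mul, integral_const_mul,
    integral_indicator_const _ hA, integral_indicator_const _ hB, integral_indicator_const _ hC,
    integral_const]
  simp only [measureReal_def]
  rw [marg_fst h1, marg_snd h2]
  simp

lemma frechet (h1 : π.map Prod.fst = μ) (h2 : π.map Prod.snd = ν) (s t : ℝ) :
    π {p : ℝ × ℝ | s < p.1 ∧ t < p.2} ≤ min (μ (Ioi s)) (ν (Ioi t)) := by
  refine le_min ?_ ?_
  · rw [← marg_fst h1 s]
    exact measure_mono fun p hp => hp.1
  · rw [← marg_snd h2 t]
    exact measure_mono fun p hp => hp.2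

end Coupling

lemma Ioi_prob_eq (μ : Measure ℝ) [IsProbabilityMeasure μ] (s : ℝ) :
    μ (Ioi s) = ENNReal.ofReal (1 - (μ (Iic s)).toReal) := by
  have h1 : μ (Ioi s) = 1 - μ (Iic s) := by
    rw [← Set.compl_Iic, measure_compl measurableSet_Iic (measure_ne_top _ _), measure_univ]
  rw [h1, ENNReal.ofReal_sub _ (cdf_nonneg (μ := μ) s), ENNReal.ofReal_one,
    ENNReal.ofReal_toReal (measure_ne_top _ _)]

/-- The comonotone coupling attains the Fréchet upper bound. -/
lemma comonotone_A (μ ν : Measure ℝ) [IsProbabilityMeasure μ] [IsProbabilityMeasure ν]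
    (s t : ℝ) :
    ((volume.restrict (Ioo (0:ℝ) 1)).map
        (fun α => (quantileFn μ α, quantileFn ν α))) {p : ℝ × ℝ | s < p.1 ∧ t < p.2}
      = min (μ (Ioi s)) (ν (Ioi t)) := by
  have hpair : AEMeasurable (fun α => (quantileFn μ α, quantileFn ν α))
      (volume.restrict (Ioo (0:ℝ) 1)) :=
    quantile_aemeasurable.prodMk quantile_aemeasurable
  rw [Measure.map_apply_of_aemeasurable hpair (measurableSet_A s t),
    Measure.restrict_apply' measurableSet_Ioo]
  set c := (μ (Iic s)).toReal with hc
  set d := (ν (Iic t)).toReal with hd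
  have hset : (fun α => (quantileFn μ α, quantileFn ν α)) ⁻¹' {p : ℝ × ℝ | s < p.1 ∧ t < p.2}
      ∩ Ioo (0:ℝ) 1 = Ioi (max c d) ∩ Ioo (0:ℝ) 1 := by
    ext α
    simp only [mem_inter_iff, mem_preimage, mem_setOf_eq, mem_Ioi, mem_Ioo, max_lt_iff]
    constructor
    · rintro ⟨⟨hs', ht'⟩, h0, h1'⟩
      refine ⟨⟨?_, ?_⟩, h0, h1'⟩
      · by_contra h; exact absurd ((le_cdf_iff h0 h1').1 (not_lt.1 h)) (not_le.2 hs')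
      · by_contra h; exact absurd ((le_cdf_iff h0 h1').1 (not_lt.1 h)) (not_le.2 ht')
    · rintro ⟨⟨hcα, hdα⟩, h0, h1'⟩
      refine ⟨⟨?_, ?_⟩, h0, h1'⟩
      · by_contra h
        exact absurd ((le_cdf_iff h0 h1').2 (not_lt.1 h)) (not_le.2 hcα)
      · by_contra h
        exact absurd ((le_cdf_iff h0 h1').2 (not_lt.1 h)) (not_le.2 hdα)
  rw [hset, vol_Ioi_inter (le_max_of_le_left (cdf_nonneg (μ := μ) s)),
    Ioi_prob_eq μ s, Ioi_prob_eq ν t, ← hc, ← hd]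
  rcases le_total c d with h | h
  · rw [max_eq_right h, min_eq_right (ENNReal.ofReal_le_ofReal (by linarith))]
  · rw [max_eq_left h, min_eq_left (ENNReal.ofReal_le_ofReal (by linarith))]

/-! ### Cost expansion and the main theorem -/

section Final
variable {μ ν : Measure ℝ} [IsProbabilityMeasure μ] [IsProbabilityMeasure ν]
variable {π : Measure (ℝ × ℝ)} [IsProbabilityMeasure π]

lemma cost_expand (h1 : π.map Prod.fst = μ) (h2 : π.map Prod.snd = ν)
    (hμ2 : Integrable (fun x : ℝ => x ^ 2) μ) (hν2 : Integrable (fun x : ℝ => x ^ 2) ν) :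
    ∫ p : ℝ × ℝ, (p.1 - p.2) ^ 2 ∂π
      = (∫ x, x ^ 2 ∂μ) + (∫ y, y ^ 2 ∂ν) - 2 * ∫ p : ℝ × ℝ, p.1 * p.2 ∂π := by
  have hf := integrable_fst_sq h1 hμ2
  have hg := integrable_snd_sq h2 hν2
  have hm := integrable_mul_coupling h1 h2 hμ2 hν2
  have e : (fun p : ℝ × ℝ => (p.1 - p.2) ^ 2)
      = fun p : ℝ × ℝ => (p.1 ^ 2 + p.2 ^ 2) - 2 * (p.1 * p.2) := by
    funext p; ring
  have hfg : Integrable (fun p : ℝ × ℝ => p.1 ^ 2 + p.2 ^ 2) π := hf.add hg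
  have hm2 : Integrable (fun p : ℝ × ℝ => 2 * (p.1 * p.2)) π := hm.const_mul 2
  rw [e, integral_sub hfg hm2, integral_add hf hg, integral_const_mul]
  have hsq : Measurable fun x : ℝ => x ^ 2 := by measurability
  have hx : ∫ x, x ^ 2 ∂μ = ∫ p : ℝ × ℝ, p.1 ^ 2 ∂π := by
    rw [← h1, integral_map (f := fun x : ℝ => x ^ 2) measurable_fst.aemeasurable
      hsq.aestronglyMeasurable]
  have hy : ∫ y, y ^ 2 ∂ν = ∫ p : ℝ × ℝ, p.2 ^ 2 ∂π := by
    rw [← h2, integral_map (f := fun x : ℝ => x ^ 2) measurable_snd.aemeasurable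
      hsq.aestronglyMeasurable]
  rw [hx, hy]

end Final

/-- For probability measures on `ℝ` with finite second moments, the squared 2-Wasserstein
distance equals `∫₀¹ (q_μ(α) − q_ν(α))² dα`: the optimal coupling on the line is the
comonotone (quantile) coupling. -/
theorem stmt_17 (μ ν : Measure ℝ) [IsProbabilityMeasure μ] [IsProbabilityMeasure ν]
    (hμ2 : Integrable (fun x : ℝ => x ^ 2) μ) (hν2 : Integrable (fun x : ℝ => x ^ 2) ν) :
    wasserstein2Sq μ ν
      = ∫ α in Set.Ioo (0 : ℝ) 1, (quantileFn μ α - quantileFn ν α) ^ 2 := by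
  classical
  set π₀ : Measure (ℝ × ℝ) := (volume.restrict (Ioo (0:ℝ) 1)).map
    (fun α => (quantileFn μ α, quantileFn ν α)) with hπ₀def
  have hpair : AEMeasurable (fun α => (quantileFn μ α, quantileFn ν α))
      (volume.restrict (Ioo (0:ℝ) 1)) :=
    quantile_aemeasurable.prodMk quantile_aemeasurable
  haveI hπ₀prob : IsProbabilityMeasure π₀ := Measure.isProbabilityMeasure_map hpair
  have hπ₀1 : π₀.map Prod.fst = μ := by
    rw [hπ₀def, AEMeasurable.map_map_of_aemeasurable measurable_fst.aemeasurable hpair]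
    exact quantile_map
  have hπ₀2 : π₀.map Prod.snd = ν := by
    rw [hπ₀def, AEMeasurable.map_map_of_aemeasurable measurable_snd.aemeasurable hpair]
    exact quantile_map
  have hcost₀ : ∫ p : ℝ × ℝ, (p.1 - p.2) ^ 2 ∂π₀
      = ∫ α in Set.Ioo (0 : ℝ) 1, (quantileFn μ α - quantileFn ν α) ^ 2 := by
    rw [hπ₀def, integral_map (f := fun p : ℝ × ℝ => (p.1 - p.2) ^ 2) hpair
      (((measurable_fst.sub measurable_snd).pow_const 2).aestronglyMeasurable)]
  have hlow : ∀ r ∈ {r : ℝ | ∃ π : Measure (ℝ × ℝ), IsProbabilityMeasure π ∧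
      π.map Prod.fst = μ ∧ π.map Prod.snd = ν ∧ r = ∫ p : ℝ × ℝ, (p.1 - p.2) ^ 2 ∂π},
      (∫ α in Set.Ioo (0 : ℝ) 1, (quantileFn μ α - quantileFn ν α) ^ 2) ≤ r := by
    rintro r ⟨ρ, hρprob, hρ1, hρ2, rfl⟩
    haveI := hρprob
    rw [← hcost₀, cost_expand hρ1 hρ2 hμ2 hν2, cost_expand hπ₀1 hπ₀2 hμ2 hν2]
    have hEle : ∫ p : ℝ × ℝ, p.1 * p.2 ∂ρ ≤ ∫ p : ℝ × ℝ, p.1 * p.2 ∂π₀ := by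
      rw [fubini_xy hρ1 hρ2 hμ2 hν2, fubini_xy hπ₀1 hπ₀2 hμ2 hν2]
      refine integral_mono (J_integrable hρ1 hρ2 hμ2 hν2) (J_integrable hπ₀1 hπ₀2 hμ2 hν2) ?_
      intro st
      dsimp only
      rw [J_expand hρ1 hρ2 st.1 st.2, J_expand hπ₀1 hπ₀2 st.1 st.2]
      have hle : (ρ {p : ℝ × ℝ | st.1 < p.1 ∧ st.2 < p.2}).toReal
          ≤ (π₀ {p : ℝ × ℝ | st.1 < p.1 ∧ st.2 < p.2}).toReal := by
        refine ENNReal.toReal_mono (measure_ne_top _ _) ?_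
        rw [hπ₀def, comonotone_A μ ν st.1 st.2]
        exact frechet hρ1 hρ2 st.1 st.2
      linarith
    linarith
  have hmem : (∫ α in Set.Ioo (0 : ℝ) 1, (quantileFn μ α - quantileFn ν α) ^ 2)
      ∈ {r : ℝ | ∃ π : Measure (ℝ × ℝ), IsProbabilityMeasure π ∧
        π.map Prod.fst = μ ∧ π.map Prod.snd = ν ∧ r = ∫ p : ℝ × ℝ, (p.1 - p.2) ^ 2 ∂π} :=
    ⟨π₀, hπ₀prob, hπ₀1, hπ₀2, hcost₀.symm⟩
  rw [wasserstein2Sq]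
  exact le_antisymm (csInf_le ⟨_, hlow⟩ hmem) (le_csInf ⟨_, hmem⟩ hlow)
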